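/- arXiv:2403.00958 — 3 statements merged into one kernel-verified Lean document; each statement's English description precedes it below -/
import Mathlib

section
/- Let P be a connected, non-separable type-C poset of height (1,1) such that the relation graph RG(P) is a tree. Then there exists a connected type-C poset P' of height (0,1) such that |V(P)| = |V(P')|, |E(P)| = |E(P')|, RG(P') is a tree, and ind g_C(P) = ind g_C(P'). -/
open scoped DirectSum

namespace LiePoset

/-- A type-C poset on the ground set `{-n, …, -1, 1, …, n} ⊆ ℤ`:
a partial order `le` supported on that set such that `i ≼ j` implies `i ≤ j` in `ℤ`,
and for `i ≠ -j`, `i ≼ j ↔ -j ≼ -i`. -/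
structure TypeCPoset (n : ℕ) where
  le : ℤ → ℤ → Prop
  supp : ∀ ⦃i j : ℤ⦄, le i j → i ≠ 0 ∧ |i| ≤ (n : ℤ) ∧ j ≠ 0 ∧ |j| ≤ (n : ℤ)
  refl : ∀ i : ℤ, i ≠ 0 → |i| ≤ (n : ℤ) → le i i
  antisymm : ∀ ⦃i j : ℤ⦄, le i j → le j i → i = j
  trans : ∀ ⦃i j k : ℤ⦄, le i j → le j k → le i k
  compat : ∀ ⦃i j : ℤ⦄, le i j → i ≤ j
  nsymm : ∀ ⦃i j : ℤ⦄, i ≠ -j → (le i j ↔ le (-j) (-i))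

namespace TypeCPoset

variable {n : ℕ}

/-- The strict relation `i ≺ j` of a type-C poset. -/
def lt (P : TypeCPoset n) (i j : ℤ) : Prop := P.le i j ∧ i ≠ j

/-- `P` has height one: every chain of `P` has cardinality at most two. -/
def HeightOne (P : TypeCPoset n) : Prop := ∀ i j k : ℤ, P.lt i j → P.lt j k → False

/-- `P` is separable: there is no relation `x ≺ y` with `x` negative and `y` positive. -/
def Separable (P : TypeCPoset n) : Prop := ∀ i j : ℤ, i < 0 → 0 < j → ¬ P.lt i j

/-- `P` has height `(1,1)`: `P⁺` has height exactly one and `P` has height exactly one. -/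
def Height11 (P : TypeCPoset n) : Prop :=
  P.HeightOne ∧ ∃ i j : ℤ, 0 < i ∧ 0 < j ∧ P.lt i j

/-- `P` has height `(0,1)`: `P⁺` has height zero and `P` has height exactly one. -/
def Height01 (P : TypeCPoset n) : Prop :=
  P.HeightOne ∧ (∀ i j : ℤ, 0 < i → 0 < j → ¬ P.lt i j) ∧ ∃ i j : ℤ, P.lt i j

end TypeCPoset

/-- The vertex set of the relation graph: the positive elements `{1, …, n}`. -/
abbrev Pos (n : ℕ) : Type := {i : ℤ // i ∈ Finset.Icc (1 : ℤ) (n : ℤ)}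

/-- The matrix index set `{-n, …, -1, 1, …, n}`. -/
abbrev Idx (n : ℕ) : Type := {i : ℤ // i ∈ (Finset.Icc (-(n : ℤ)) (n : ℤ)).erase 0}

/-- Negation on the index set. -/
def Idx.neg {n : ℕ} (a : Idx n) : Idx n :=
  ⟨-a.val, by
    have h := a.property
    simp only [Finset.mem_erase, Finset.mem_Icc] at h ⊢
    omega⟩

/-- A positive vertex as a matrix index. -/
def Pos.toIdx {n : ℕ} (i : Pos n) : Idx n :=
  ⟨i.val, by
    have h := i.property
    simp only [Finset.mem_erase, Finset.mem_Icc] at h ⊢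
    omega⟩

/-- `2n × 2n` complex matrices, with rows and columns indexed by `{-n, …, -1, 1, …, n}`. -/
abbrev Mat (n : ℕ) : Type := Matrix (Idx n) (Idx n) ℂ

namespace TypeCPoset

variable {n : ℕ}

/-- `D_i = E_{-i,-i} - E_{i,i}`. -/
def Dmat (i : Pos n) : Mat n :=
  Matrix.single i.toIdx.neg i.toIdx.neg 1 - Matrix.single i.toIdx i.toIdx 1

/-- `R^±_{i,j} = E_{-i,j} + E_{-j,i}`. -/
def Rpm (i j : Pos n) : Mat n :=
  Matrix.single i.toIdx.neg j.toIdx 1 + Matrix.single j.toIdx.neg i.toIdx 1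

/-- `R_{i,j} = E_{-j,-i} - E_{i,j}`. -/
def Rdash (i j : Pos n) : Mat n :=
  Matrix.single j.toIdx.neg i.toIdx.neg 1 - Matrix.single i.toIdx j.toIdx 1

/-- `E_{-i,i}`. -/
def Eloop (i : Pos n) : Mat n := Matrix.single i.toIdx.neg i.toIdx 1

/-- The standard spanning set of the type-C Lie poset algebra `g_C(P)`. -/
def gcSet (P : TypeCPoset n) : Set (Mat n) :=
  {M | (∃ i : Pos n, M = Dmat i)
      ∨ (∃ i j : Pos n, P.lt (-j.val) (-i.val) ∧ M = Rdash i j)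
      ∨ (∃ i j : Pos n, P.lt (-i.val) j.val ∧ P.lt (-j.val) i.val ∧ M = Rpm i j)
      ∨ (∃ i : Pos n, P.lt (-i.val) i.val ∧ M = Eloop i)}

/-- The simple graph underlying the relation graph `RG(P)`:
vertices `{1, …, n}`, with `i` adjacent to `j` (for `i ≠ j`) whenever there is a
(dashed or non-dashed) edge between them. -/
def RG (P : TypeCPoset n) : SimpleGraph (Pos n) where
  Adj i j := i ≠ j ∧ (P.lt (-i.val) j.val ∨ P.lt (-j.val) i.val ∨
      P.lt (-i.val) (-j.val) ∨ P.lt (-j.val) (-i.val))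
  symm := by
    constructor
    intro i j h
    exact ⟨h.1.symm, by tauto⟩
  loopless := by
    constructor
    intro i h
    exact h.1 rfl

/-- `RG(P)` has a (non-dashed) self-loop at vertex `i`, i.e. `-i ≺ i`. -/
def HasLoopAt (P : TypeCPoset n) (i : Pos n) : Prop := P.lt (-i.val) i.val

/-- There is a dashed edge `{i,j}` in `RG(P)`. -/
def DashedEdge (P : TypeCPoset n) (i j : Pos n) : Prop :=
  P.lt (-i.val) (-j.val) ∨ P.lt (-j.val) (-i.val)

/-- There is a non-dashed edge `{i,j}` in `RG(P)` (a self-loop when `i = j`). -/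
def NonDashedEdge (P : TypeCPoset n) (i j : Pos n) : Prop :=
  P.lt (-i.val) j.val ∨ P.lt (-j.val) i.val

open scoped Classical in
/-- The set of non-dashed edges of `RG(P)` (including self-loops). -/
noncomputable def edgesND (P : TypeCPoset n) : Finset (Sym2 (Pos n)) :=
  Finset.univ.filter fun e => ∃ i j : Pos n, e = Sym2.mk i j ∧ NonDashedEdge P i j

open scoped Classical in
/-- The set of dashed edges of `RG(P)`. -/
noncomputable def edgesD (P : TypeCPoset n) : Finset (Sym2 (Pos n)) :=
  Finset.univ.filter fun e => ∃ i j : Pos n, e = Sym2.mk i j ∧ i ≠ j ∧ DashedEdge P i j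

/-- `|E(P)|`, the number of edges of `RG(P)`. -/
noncomputable def numEdges (P : TypeCPoset n) : ℕ := (P.edgesND).card + (P.edgesD).card

/-- The cycles of `RG(P)`, recorded by their edge sets: a self-loop at `v`, or a cycle
of the underlying simple graph.  A cycle has an odd (resp. even) number of vertices
iff its edge set has odd (resp. even) cardinality. -/
def cycles (P : TypeCPoset n) : Set (Finset (Sym2 (Pos n))) :=
  {s | ∃ v : Pos n, P.HasLoopAt v ∧ s = {Sym2.mk v v}} ∪
  {s | ∃ (v : Pos n) (p : (RG P).Walk v v), p.IsCycle ∧ s = p.edges.toFinset}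

/-- The cycles of `RG(P)` contained in the connected component `c`. -/
def cyclesIn (P : TypeCPoset n) (c : (RG P).ConnectedComponent) :
    Set (Finset (Sym2 (Pos n))) :=
  {s | ∃ v : Pos n, (RG P).connectedComponentMk v = c ∧
    ((P.HasLoopAt v ∧ s = {Sym2.mk v v}) ∨
      ∃ p : (RG P).Walk v v, p.IsCycle ∧ s = p.edges.toFinset)}

/-- `η(P)`: the number of connected components of `RG(P)` containing no odd cycles. -/
noncomputable def eta (P : TypeCPoset n) : ℕ :=
  Nat.card {c : (RG P).ConnectedComponent // ¬ ∃ s ∈ P.cyclesIn c, Odd s.card}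

/-- The vertices visited by a cycle, recorded by its edge set. -/
def cycleVerts (s : Finset (Sym2 (Pos n))) : Set (Pos n) := {v | ∃ e ∈ s, v ∈ e}

end TypeCPoset

section LieDefs

variable (L : Type*) [LieRing L] [LieAlgebra ℂ L]

/-- The kernel of the bilinear form `B_φ(x, y) = φ⁅x, y⁆`. -/
def coadjKernel (φ : Module.Dual ℂ L) : Submodule ℂ L where
  carrier := {x | ∀ y : L, φ ⁅x, y⁆ = 0}
  add_mem' := by
    intro a b ha hb y
    simp only [Set.mem_setOf_eq] at ha hb ⊢
    rw [add_lie, map_add, ha y, hb y, add_zero]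
  zero_mem' := by
    intro y
    rw [zero_lie, map_zero]
  smul_mem' := by
    intro c x hx y
    simp only [Set.mem_setOf_eq] at hx ⊢
    rw [smul_lie, map_smul, hx y, smul_zero]

/-- The index of a Lie algebra: `ind g = min_{φ ∈ g*} dim ker(B_φ)`. -/
noncomputable def lieIndex : ℕ :=
  sInf (Set.range fun φ : Module.Dual ℂ L => Module.finrank ℂ (coadjKernel L φ))

/-- `φ` is a contact form on `L`: `L` is odd-dimensional and the restriction of
`B_φ(x, y) = φ⁅x, y⁆` to `ker φ` is nondegenerate. -/
def IsContactForm (φ : Module.Dual ℂ L) : Prop :=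
  Odd (Module.finrank ℂ L) ∧
    ∀ x : L, φ x = 0 → (∀ y : L, φ y = 0 → φ ⁅x, y⁆ = 0) → x = 0

/-- `L` is a contact Lie algebra. -/
def IsContact : Prop := ∃ φ : Module.Dual ℂ L, IsContactForm L φ

end LieDefs

end LiePoset

namespace LiePoset

attribute [local instance 100] LieRing.ofAssociativeRing

section Inv

variable {L L' : Type*} [LieRing L] [LieAlgebra ℂ L] [LieRing L'] [LieAlgebra ℂ L']

lemma coadjKernel_map (e : L ≃ₗ⁅ℂ⁆ L') (φ' : Module.Dual ℂ L') :
    Submodule.map (e.toLinearEquiv : L →ₗ[ℂ] L')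
      (coadjKernel L (φ'.comp (e.toLinearEquiv : L →ₗ[ℂ] L'))) = coadjKernel L' φ' := by
  ext z
  simp only [Submodule.mem_map]
  constructor
  · rintro ⟨x, hx, rfl⟩
    intro y
    have := hx (e.symm y)
    simp only [LinearMap.comp_apply] at this
    have h2 : (e.toLinearEquiv : L →ₗ[ℂ] L') ⁅x, e.symm y⁆ = ⁅(e.toLinearEquiv : L →ₗ[ℂ] L') x, y⁆ := by
      show e ⁅x, e.symm y⁆ = ⁅e x, y⁆
      rw [LieEquiv.map_lie]
      simp
    rw [h2] at this
    exact this
  · intro hz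
    refine ⟨e.symm z, ?_, by simp⟩
    intro y
    have := hz (e y)
    simp only [LinearMap.comp_apply]
    have h2 : (e.toLinearEquiv : L →ₗ[ℂ] L') ⁅e.symm z, y⁆ = ⁅z, e y⁆ := by
      show e ⁅e.symm z, y⁆ = ⁅z, e y⁆
      rw [LieEquiv.map_lie]
      simp
    rw [h2]
    exact this

lemma lieIndex_eq_of_equiv (e : L ≃ₗ⁅ℂ⁆ L') : lieIndex L = lieIndex L' := by
  unfold lieIndex
  congr 1
  apply Set.eq_of_subset_of_subset
  · rintro x ⟨φ, rfl⟩
    refine ⟨φ.comp (e.symm.toLinearEquiv : L' →ₗ[ℂ] L), ?_⟩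
    have h := coadjKernel_map e.symm φ
    show Module.finrank ℂ (coadjKernel L' _) = Module.finrank ℂ (coadjKernel L φ)
    rw [← h, LinearEquiv.finrank_map_eq]
  · rintro x ⟨φ', rfl⟩
    refine ⟨φ'.comp (e.toLinearEquiv : L →ₗ[ℂ] L'), ?_⟩
    have h := coadjKernel_map e φ'
    show Module.finrank ℂ (coadjKernel L _) = Module.finrank ℂ (coadjKernel L' φ')
    rw [← h, LinearEquiv.finrank_map_eq]
end Inv
set_option linter.dupNamespace false
section Conj
open Matrix
variable {n : ℕ}

def cmap (ρ : Idx n → Idx n) (ε : Idx n → ℂ) : Mat n →ₗ[ℂ] Mat n where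
  toFun M := Matrix.of fun a b => ε a * ε b * M (ρ a) (ρ b)
  map_add' M N := by ext a b; simp [Matrix.add_apply, mul_add]
  map_smul' c M := by ext a b; simp [Matrix.smul_apply]; ring

variable (ρ : Idx n → Idx n) (ε : Idx n → ℂ)

lemma cmap_apply (M : Mat n) (a b : Idx n) : cmap ρ ε M a b = ε a * ε b * M (ρ a) (ρ b) := rfl

lemma cmap_mul (hρ : ∀ a, ρ (ρ a) = a) (hε : ∀ a, ε a * ε a = 1) (M N : Mat n) :
    cmap ρ ε (M * N) = cmap ρ ε M * cmap ρ ε N := by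
  ext a b
  rw [Matrix.mul_apply, cmap_apply, Matrix.mul_apply]
  have key : ∀ c : Idx n, cmap ρ ε M a c * cmap ρ ε N c b
      = ε a * ε b * (M (ρ a) (ρ c) * N (ρ c) (ρ b)) := by
    intro c
    rw [cmap_apply, cmap_apply]
    calc ε a * ε c * M (ρ a) (ρ c) * (ε c * ε b * N (ρ c) (ρ b))
        = (ε c * ε c) * (ε a * ε b * (M (ρ a) (ρ c) * N (ρ c) (ρ b))) := by ring
      _ = ε a * ε b * (M (ρ a) (ρ c) * N (ρ c) (ρ b)) := by rw [hε c, one_mul]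
  simp only [key]
  rw [← Finset.mul_sum]
  congr 1
  exact (Equiv.sum_comp ⟨ρ, ρ, hρ, hρ⟩ (fun c => M (ρ a) c * N c (ρ b))).symm

lemma cmap_lie (hρ : ∀ a, ρ (ρ a) = a) (hε : ∀ a, ε a * ε a = 1) (M N : Mat n) :
    cmap ρ ε ⁅M, N⁆ = ⁅cmap ρ ε M, cmap ρ ε N⁆ := by
  rw [Ring.lie_def, Ring.lie_def, map_sub, cmap_mul ρ ε hρ hε, cmap_mul ρ ε hρ hε]

noncomputable def cequiv (hρ : ∀ a, ρ (ρ a) = a) (hε : ∀ a, ε a * ε a = 1) :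
    Mat n ≃ₗ[ℂ] Mat n :=
  LinearEquiv.ofLinear (cmap ρ ε) (cmap ρ (fun a => ε (ρ a)))
    (by
      ext M a b
      simp only [LinearMap.comp_apply, cmap_apply, LinearMap.id_apply]
      calc ε a * ε b * (ε (ρ (ρ a)) * ε (ρ (ρ b)) * M (ρ (ρ a)) (ρ (ρ b)))
          = (ε a * ε a) * ((ε b * ε b) * M a b) := by rw [hρ, hρ]; ring
        _ = M a b := by rw [hε, hε, one_mul, one_mul])
    (by
      ext M a b
      simp only [LinearMap.comp_apply, cmap_apply, LinearMap.id_apply]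
      calc ε (ρ a) * ε (ρ b) * (ε (ρ a) * ε (ρ b) * M (ρ (ρ a)) (ρ (ρ b)))
          = (ε (ρ a) * ε (ρ a)) * ((ε (ρ b) * ε (ρ b)) * M (ρ (ρ a)) (ρ (ρ b))) := by ring
        _ = M a b := by rw [hε, hε, one_mul, one_mul, hρ, hρ])

lemma cequiv_apply (hρ : ∀ a, ρ (ρ a) = a) (hε : ∀ a, ε a * ε a = 1) (M : Mat n) :
    cequiv ρ ε hρ hε M = cmap ρ ε M := rfl

lemma cmap_std (hρ : ∀ a, ρ (ρ a) = a) (p q : Idx n) :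
    cmap ρ ε (Matrix.single p q (1:ℂ))
      = (ε (ρ p) * ε (ρ q)) • Matrix.single (ρ p) (ρ q) (1:ℂ) := by
  ext a b
  have e1 : cmap ρ ε (Matrix.single p q (1:ℂ)) a b
      = ε a * ε b * (if p = ρ a ∧ q = ρ b then (1:ℂ) else 0) := rfl
  have e2 : ((ε (ρ p) * ε (ρ q)) • Matrix.single (ρ p) (ρ q) (1:ℂ)) a b
      = ε (ρ p) * ε (ρ q) * (if ρ p = a ∧ ρ q = b then (1:ℂ) else 0) := by
    rw [Matrix.smul_apply, smul_eq_mul]; rfl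
  rw [e1, e2]
  by_cases h : ρ p = a ∧ ρ q = b
  · obtain ⟨rfl, rfl⟩ := h
    rw [if_pos ⟨(hρ p).symm, (hρ q).symm⟩, if_pos ⟨rfl, rfl⟩]
  · rw [if_neg h, if_neg (fun hc => h ⟨by rw [hc.1, hρ], by rw [hc.2, hρ]⟩)]; simp

end Conj
open Matrix
variable {n : ℕ}

lemma Idx.neg_neg (a : Idx n) : a.neg.neg = a := by
  apply Subtype.ext; show -(-a.val) = a.val; ring

lemma Idx.neg_val (a : Idx n) : a.neg.val = -a.val := rfl

namespace TypeCPoset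
variable (P : TypeCPoset n)

lemma lt_nsymm {i j : ℤ} (h : i ≠ -j) : P.lt i j ↔ P.lt (-j) (-i) := by
  unfold lt
  rw [P.nsymm h]
  constructor
  · rintro ⟨h1, h2⟩; exact ⟨h1, fun hc => h2 (by omega)⟩
  · rintro ⟨h1, h2⟩; exact ⟨h1, fun hc => h2 (by omega)⟩

/-- vertex `i` is a "lower" vertex: `i ≺ w` for some `w`. -/
def FlipV (i : Pos n) : Prop := ∃ w, P.lt i.val w

open Classical in
noncomputable def ρP : Idx n → Idx n :=
  fun a => if ∃ w, P.lt |a.val| w then a.neg else a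

open Classical in
noncomputable def εP : Idx n → ℂ :=
  fun a => if a.val < 0 ∧ ∃ w, P.lt |a.val| w then -1 else 1

lemma ρP_invol : ∀ a, P.ρP (P.ρP a) = a := by
  intro a
  unfold ρP
  by_cases h : ∃ w, P.lt |a.val| w
  · rw [if_pos h]
    have h' : ∃ w, P.lt |a.neg.val| w := by
      simpa [Idx.neg_val, abs_neg] using h
    rw [if_pos h', Idx.neg_neg]
  · rw [if_neg h, if_neg h]

lemma εP_sq : ∀ a, P.εP a * P.εP a = 1 := by
  intro a
  unfold εP
  by_cases h : a.val < 0 ∧ ∃ w, P.lt |a.val| w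
  · rw [if_pos h]; ring
  · rw [if_neg h]; ring

-- facts for positive vertices
lemma toIdx_val (i : Pos n) : i.toIdx.val = i.val := rfl

lemma abs_toIdx (i : Pos n) : |i.toIdx.val| = i.val := by
  have := i.2
  simp only [Finset.mem_Icc] at this
  rw [toIdx_val]; exact abs_of_pos (by omega)

lemma abs_toIdx_neg (i : Pos n) : |i.toIdx.neg.val| = i.val := by
  rw [Idx.neg_val, abs_neg]; exact abs_toIdx i

lemma ρP_toIdx_of_flip (i : Pos n) (h : P.FlipV i) : P.ρP i.toIdx = i.toIdx.neg := by
  unfold ρP; rw [if_pos (by rw [abs_toIdx]; exact h)]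

lemma ρP_toIdx_of_not_flip (i : Pos n) (h : ¬ P.FlipV i) : P.ρP i.toIdx = i.toIdx := by
  unfold ρP; rw [if_neg (by rw [abs_toIdx]; exact h)]

lemma ρP_negIdx_of_flip (i : Pos n) (h : P.FlipV i) : P.ρP i.toIdx.neg = i.toIdx := by
  unfold ρP; rw [if_pos (by rw [abs_toIdx_neg]; exact h), Idx.neg_neg]

lemma ρP_negIdx_of_not_flip (i : Pos n) (h : ¬ P.FlipV i) : P.ρP i.toIdx.neg = i.toIdx.neg := by
  unfold ρP; rw [if_neg (by rw [abs_toIdx_neg]; exact h)]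

lemma εP_toIdx (i : Pos n) : P.εP i.toIdx = 1 := by
  unfold εP
  rw [if_neg]
  rintro ⟨h1, -⟩
  have := i.2
  simp only [Finset.mem_Icc] at this
  rw [toIdx_val] at h1
  omega

lemma εP_negIdx_of_flip (i : Pos n) (h : P.FlipV i) : P.εP i.toIdx.neg = -1 := by
  unfold εP
  rw [if_pos]
  refine ⟨?_, by rw [abs_toIdx_neg]; exact h⟩
  have := i.2
  simp only [Finset.mem_Icc] at this
  rw [Idx.neg_val, toIdx_val]
  omega

lemma εP_negIdx_of_not_flip (i : Pos n) (h : ¬ P.FlipV i) : P.εP i.toIdx.neg = 1 := by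
  unfold εP
  rw [if_neg]
  rintro ⟨-, h2⟩
  rw [abs_toIdx_neg] at h2
  exact h h2

-- images of generators
lemma cmap_Dmat (i : Pos n) :
    cmap P.ρP P.εP (Dmat i) = Dmat i ∨ cmap P.ρP P.εP (Dmat i) = -(Dmat i) := by
  by_cases h : P.FlipV i
  · right
    unfold Dmat
    rw [map_sub, cmap_std _ _ P.ρP_invol, cmap_std _ _ P.ρP_invol,
      P.ρP_negIdx_of_flip i h, P.ρP_toIdx_of_flip i h,
      P.εP_toIdx, P.εP_negIdx_of_flip i h]
    simp
  · left
    unfold Dmat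
    rw [map_sub, cmap_std _ _ P.ρP_invol, cmap_std _ _ P.ρP_invol,
      P.ρP_negIdx_of_not_flip i h, P.ρP_toIdx_of_not_flip i h,
      P.εP_toIdx, P.εP_negIdx_of_not_flip i h]
    simp

lemma cmap_Rdash (i j : Pos n) (hi : P.FlipV i) (hj : ¬ P.FlipV j) :
    cmap P.ρP P.εP (Rdash i j) = Rpm i j := by
  unfold Rdash Rpm
  rw [map_sub, cmap_std _ _ P.ρP_invol, cmap_std _ _ P.ρP_invol,
    P.ρP_negIdx_of_not_flip j hj, P.ρP_negIdx_of_flip i hi,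
    P.ρP_toIdx_of_flip i hi, P.ρP_toIdx_of_not_flip j hj,
    P.εP_toIdx, P.εP_toIdx, P.εP_negIdx_of_flip i hi, P.εP_negIdx_of_not_flip j hj]
  simp only [one_mul, mul_one, one_smul, neg_one_smul, sub_neg_eq_add]
  exact add_comm _ _

lemma cmap_Rpm (i j : Pos n) (hi : ¬ P.FlipV i) (hj : ¬ P.FlipV j) :
    cmap P.ρP P.εP (Rpm i j) = Rpm i j := by
  unfold Rpm
  rw [map_add, cmap_std _ _ P.ρP_invol, cmap_std _ _ P.ρP_invol,
    P.ρP_negIdx_of_not_flip i hi, P.ρP_negIdx_of_not_flip j hj,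
    P.ρP_toIdx_of_not_flip i hi, P.ρP_toIdx_of_not_flip j hj,
    P.εP_toIdx, P.εP_toIdx, P.εP_negIdx_of_not_flip i hi, P.εP_negIdx_of_not_flip j hj]
  simp

end TypeCPoset
namespace TypeCPoset
variable {n : ℕ} (P : TypeCPoset n)

/-- `i` and `j` (positive) are joined by some edge of `RG(P)`. -/
def EdgeRel (a b : ℤ) : Prop :=
  P.lt (-a) b ∨ P.lt (-b) a ∨ P.lt (-a) (-b) ∨ P.lt (-b) (-a)

lemma EdgeRel.symm {a b : ℤ} (h : P.EdgeRel a b) : P.EdgeRel b a := by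
  unfold EdgeRel at *; tauto

lemma EdgeRel.bounds {a b : ℤ} (h : P.EdgeRel a b) :
    a ≠ 0 ∧ |a| ≤ (n : ℤ) ∧ b ≠ 0 ∧ |b| ≤ (n : ℤ) := by
  have habs : ∀ x : ℤ, |(-x)| = |x| := fun x => abs_neg x
  rcases h with h | h | h | h <;> obtain ⟨h1, h2, h3, h4⟩ := P.supp h.1 <;>
    rw [habs] at * <;> refine ⟨by omega, ?_, by omega, ?_⟩ <;> omega

/-- The "flattened" poset: same edges as `P`, all made non-dashed. -/
def flat : TypeCPoset n where
  le i j := (i = j ∧ i ≠ 0 ∧ |i| ≤ (n : ℤ)) ∨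
    (i < 0 ∧ 0 < j ∧ i ≠ -j ∧ P.EdgeRel (-i) j)
  supp := by
    rintro i j (⟨rfl, h1, h2⟩ | ⟨h1, h2, h3, h4⟩)
    · exact ⟨h1, h2, h1, h2⟩
    · obtain ⟨e1, e2, e3, e4⟩ := EdgeRel.bounds P h4
      rw [abs_neg] at e2
      exact ⟨by omega, e2, e3, e4⟩
  refl := fun i h1 h2 => Or.inl ⟨rfl, h1, h2⟩
  antisymm := by
    rintro i j (⟨rfl, -, -⟩ | ⟨h1, h2, -, -⟩) h'
    · rfl
    · rcases h' with ⟨rfl, -, -⟩ | ⟨k1, k2, -, -⟩ <;> omega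
  trans := by
    rintro i j k (⟨rfl, -, -⟩ | ⟨h1, h2, h3, h4⟩) h'
    · exact h'
    · rcases h' with ⟨rfl, -, -⟩ | ⟨k1, k2, -, -⟩
      · exact Or.inr ⟨h1, h2, h3, h4⟩
      · omega
  compat := by
    rintro i j (⟨rfl, -, -⟩ | ⟨h1, h2, -, -⟩) <;> omega
  nsymm := by
    intro i j hij
    constructor
    · rintro (⟨rfl, h1, h2⟩ | ⟨h1, h2, h3, h4⟩)
      · exact Or.inl ⟨rfl, by omega, by rwa [abs_neg]⟩
      · refine Or.inr ⟨by omega, by omega, by omega, ?_⟩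
        rw [neg_neg]
        exact EdgeRel.symm P h4
    · rintro (⟨he, h1, h2⟩ | ⟨h1, h2, h3, h4⟩)
      · have : i = j := by omega
        subst this
        exact Or.inl ⟨rfl, by omega, by rw [abs_neg] at h2; omega⟩
      · refine Or.inr ⟨by omega, by omega, by omega, ?_⟩
        rw [neg_neg] at h4
        exact EdgeRel.symm P h4

lemma lt_flat_iff (x y : ℤ) :
    P.flat.lt x y ↔ (x < 0 ∧ 0 < y ∧ x ≠ -y ∧ P.EdgeRel (-x) y) := by
  constructor
  · rintro ⟨(⟨rfl, -, -⟩ | h), hne⟩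
    · exact absurd rfl hne
    · exact h
  · intro h
    exact ⟨Or.inr h, by omega⟩

lemma flat_no_loop (v : Pos n) : ¬ P.flat.HasLoopAt v := by
  intro h
  rw [HasLoopAt, lt_flat_iff] at h
  omega

lemma pos_val_pos (i : Pos n) : 0 < i.val ∧ i.val ≤ (n : ℤ) := by
  have := i.2
  simp only [Finset.mem_Icc] at this
  omega

lemma RG_flat : RG P.flat = RG P := by
  ext i j
  obtain ⟨hi, -⟩ := pos_val_pos i
  obtain ⟨hj, -⟩ := pos_val_pos j
  show (i ≠ j ∧ _) ↔ (i ≠ j ∧ _)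
  simp only [lt_flat_iff]
  constructor
  · rintro ⟨hne, (h | h | h | h)⟩
    · exact ⟨hne, by rw [neg_neg] at h; exact h.2.2.2⟩
    · exact ⟨hne, by rw [neg_neg] at h; exact EdgeRel.symm P h.2.2.2⟩
    · omega
    · omega
  · rintro ⟨hne, h⟩
    refine ⟨hne, Or.inl ⟨by omega, hj, ?_, by rwa [neg_neg]⟩⟩
    have : i.val ≠ j.val := fun hc => hne (Subtype.ext hc)
    omega

lemma flat_nondashed_iff (i j : Pos n) :
    NonDashedEdge P.flat i j ↔ (i.val ≠ j.val ∧ P.EdgeRel i.val j.val) := by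
  obtain ⟨hi, -⟩ := pos_val_pos i
  obtain ⟨hj, -⟩ := pos_val_pos j
  unfold NonDashedEdge
  simp only [lt_flat_iff]
  constructor
  · rintro (h | h)
    · rw [neg_neg] at h
      exact ⟨by omega, h.2.2.2⟩
    · rw [neg_neg] at h
      exact ⟨by omega, EdgeRel.symm P h.2.2.2⟩
  · rintro ⟨hne, h⟩
    exact Or.inl ⟨by omega, hj, by omega, by rwa [neg_neg]⟩

lemma flat_not_dashed (i j : Pos n) : ¬ DashedEdge P.flat i j := by
  obtain ⟨hi, -⟩ := pos_val_pos i
  obtain ⟨hj, -⟩ := pos_val_pos j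
  rintro (h | h) <;> rw [lt_flat_iff] at h <;> omega

lemma not_nd_and_dashed (hHO : P.HeightOne) (i j : Pos n)
    (hnd : NonDashedEdge P i j) (hd : DashedEdge P i j) : False := by
  obtain ⟨hi, -⟩ := pos_val_pos i
  obtain ⟨hj, -⟩ := pos_val_pos j
  rcases hnd with h1 | h1 <;> rcases hd with h2 | h2
  · have h2' : P.lt j.val i.val := by
      have := (P.lt_nsymm (show (-i.val) ≠ -(-j.val) by omega)).mp h2
      rwa [neg_neg, neg_neg] at this
    exact hHO _ _ _ h1 h2'
  · exact hHO _ _ _ h2 h1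
  · exact hHO _ _ _ h2 h1
  · have h2' : P.lt i.val j.val := by
      have := (P.lt_nsymm (show (-j.val) ≠ -(-i.val) by omega)).mp h2
      rwa [neg_neg, neg_neg] at this
    exact hHO _ _ _ h1 h2'

lemma dashed_symm {i j : Pos n} (h : DashedEdge P i j) : DashedEdge P j i := by
  unfold DashedEdge at *; tauto

lemma Rpm_comm (i j : Pos n) : Rpm i j = Rpm j i := add_comm _ _

end TypeCPoset
namespace TypeCPoset
variable {n : ℕ} (P : TypeCPoset n)

lemma cequiv_toLinearMap (ρ : Idx n → Idx n) (ε : Idx n → ℂ) (hρ hε) :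
    ((cequiv ρ ε hρ hε : Mat n ≃ₗ[ℂ] Mat n) : Mat n →ₗ[ℂ] Mat n) = cmap ρ ε := rfl

lemma flat_lt_of_edge (i j : Pos n) (hne : i.val ≠ j.val) (h : P.EdgeRel i.val j.val) :
    P.flat.lt (-i.val) j.val := by
  obtain ⟨hi, -⟩ := pos_val_pos i
  obtain ⟨hj, -⟩ := pos_val_pos j
  rw [lt_flat_iff]
  exact ⟨by omega, hj, by omega, by rwa [neg_neg]⟩

lemma lt_pos_of_dashed {i j : Pos n} (hd : P.lt (-j.val) (-i.val)) : P.lt i.val j.val := by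
  obtain ⟨hi, -⟩ := pos_val_pos i
  obtain ⟨hj, -⟩ := pos_val_pos j
  have := (P.lt_nsymm (show (-j.val) ≠ -(-i.val) by omega)).mp hd
  rwa [neg_neg, neg_neg] at this

lemma map_span_flat (hHO : P.HeightOne) (noLoop : ∀ v : Pos n, ¬ P.HasLoopAt v) :
    Submodule.map (cmap P.ρP P.εP) (Submodule.span ℂ (gcSet P))
      = Submodule.span ℂ (gcSet P.flat) := by
  apply le_antisymm
  · rw [Submodule.map_span]
    apply Submodule.span_le.mpr
    rintro y ⟨x, hx, rfl⟩
    rcases hx with ⟨i, rfl⟩ | ⟨i, j, hd, rfl⟩ | ⟨i, j, h1, h2, rfl⟩ | ⟨i, hl, rfl⟩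
    · rcases P.cmap_Dmat i with h | h
      · rw [h]; exact Submodule.subset_span (Or.inl ⟨i, rfl⟩)
      · rw [h]
        exact neg_mem (Submodule.subset_span (Or.inl ⟨i, rfl⟩))
    · have h' : P.lt i.val j.val := P.lt_pos_of_dashed hd
      have hfi : P.FlipV i := ⟨j.val, h'⟩
      have hfj : ¬ P.FlipV j := fun ⟨w, hw⟩ => hHO _ _ _ h' hw
      rw [P.cmap_Rdash i j hfi hfj]
      have hedge : P.EdgeRel i.val j.val := Or.inr (Or.inr (Or.inr hd))
      have hne : i.val ≠ j.val := h'.2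
      exact Submodule.subset_span (Or.inr (Or.inr (Or.inl ⟨i, j,
        P.flat_lt_of_edge i j hne hedge,
        P.flat_lt_of_edge j i (fun hc => hne hc.symm) (EdgeRel.symm P hedge), rfl⟩)))
    · have hfi : ¬ P.FlipV i := fun ⟨w, hw⟩ => hHO _ _ _ h2 hw
      have hfj : ¬ P.FlipV j := fun ⟨w, hw⟩ => hHO _ _ _ h1 hw
      rw [P.cmap_Rpm i j hfi hfj]
      have hne : i.val ≠ j.val := by
        intro hc
        rw [← hc] at h1
        exact noLoop i h1
      have hedge : P.EdgeRel i.val j.val := Or.inl h1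
      exact Submodule.subset_span (Or.inr (Or.inr (Or.inl ⟨i, j,
        P.flat_lt_of_edge i j hne hedge,
        P.flat_lt_of_edge j i (fun hc => hne hc.symm) (EdgeRel.symm P hedge), rfl⟩)))
    · exact absurd hl (noLoop i)
  · apply Submodule.span_le.mpr
    rintro y hy
    rcases hy with ⟨i, rfl⟩ | ⟨i, j, hd, rfl⟩ | ⟨i, j, h1, h2, rfl⟩ | ⟨i, hl, rfl⟩
    · rcases P.cmap_Dmat i with h | h
      · exact ⟨Dmat i, Submodule.subset_span (Or.inl ⟨i, rfl⟩), h⟩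
      · refine ⟨-(Dmat i), neg_mem (Submodule.subset_span (Or.inl ⟨i, rfl⟩)), ?_⟩
        rw [map_neg, h, neg_neg]
    · rw [lt_flat_iff] at hd
      obtain ⟨-, h2, -, -⟩ := hd
      obtain ⟨hi, -⟩ := pos_val_pos i
      omega
    · rw [lt_flat_iff] at h1 h2
      obtain ⟨-, -, hne', he⟩ := h1
      obtain ⟨hi, -⟩ := pos_val_pos i
      obtain ⟨hj, -⟩ := pos_val_pos j
      have hne : i.val ≠ j.val := by omega
      have hedge : P.EdgeRel i.val j.val := by rwa [neg_neg] at he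
      rcases hedge with e1 | e1 | e1 | e1
      · have e2 : P.lt (-j.val) i.val := by
          have := (P.lt_nsymm (show (-i.val) ≠ -j.val by omega)).mp e1
          rwa [neg_neg] at this
        have hfi : ¬ P.FlipV i := fun ⟨w, hw⟩ => hHO _ _ _ e2 hw
        have hfj : ¬ P.FlipV j := fun ⟨w, hw⟩ => hHO _ _ _ e1 hw
        exact ⟨Rpm i j, Submodule.subset_span (Or.inr (Or.inr (Or.inl ⟨i, j, e1, e2, rfl⟩))),
          P.cmap_Rpm i j hfi hfj⟩
      · have e2 : P.lt (-i.val) j.val := by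
          have := (P.lt_nsymm (show (-j.val) ≠ -i.val by omega)).mp e1
          rwa [neg_neg] at this
        have hfi : ¬ P.FlipV i := fun ⟨w, hw⟩ => hHO _ _ _ e1 hw
        have hfj : ¬ P.FlipV j := fun ⟨w, hw⟩ => hHO _ _ _ e2 hw
        exact ⟨Rpm i j, Submodule.subset_span (Or.inr (Or.inr (Or.inl ⟨i, j, e2, e1, rfl⟩))),
          P.cmap_Rpm i j hfi hfj⟩
      · have h' : P.lt j.val i.val := by
          have := (P.lt_nsymm (show (-i.val) ≠ -(-j.val) by omega)).mp e1
          rwa [neg_neg, neg_neg] at this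
        have hfj : P.FlipV j := ⟨i.val, h'⟩
        have hfi : ¬ P.FlipV i := fun ⟨w, hw⟩ => hHO _ _ _ h' hw
        refine ⟨Rdash j i, Submodule.subset_span (Or.inr (Or.inl ⟨j, i, e1, rfl⟩)), ?_⟩
        rw [P.cmap_Rdash j i hfj hfi, Rpm_comm]
      · have h' : P.lt i.val j.val := by
          have := (P.lt_nsymm (show (-j.val) ≠ -(-i.val) by omega)).mp e1
          rwa [neg_neg, neg_neg] at this
        have hfi : P.FlipV i := ⟨j.val, h'⟩
        have hfj : ¬ P.FlipV j := fun ⟨w, hw⟩ => hHO _ _ _ h' hw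
        exact ⟨Rdash i j, Submodule.subset_span (Or.inr (Or.inl ⟨i, j, e1, rfl⟩)),
          P.cmap_Rdash i j hfi hfj⟩
    · rw [lt_flat_iff] at hl
      exact absurd rfl hl.2.2.1

end TypeCPoset
namespace TypeCPoset
variable {n : ℕ} (P : TypeCPoset n)

lemma flat_numEdges (hHO : P.HeightOne) (noLoop : ∀ v : Pos n, ¬ P.HasLoopAt v) :
    P.flat.numEdges = P.numEdges := by
  classical
  have hND : P.flat.edgesND = P.edgesND ∪ P.edgesD := by
    ext e
    simp only [edgesND, edgesD, Finset.mem_union, Finset.mem_filter, Finset.mem_univ, true_and]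
    constructor
    · rintro ⟨i, j, rfl, hnd⟩
      rw [flat_nondashed_iff] at hnd
      obtain ⟨hne, hedge⟩ := hnd
      have hne' : i ≠ j := fun hc => hne (congrArg Subtype.val hc)
      rcases hedge with e1 | e1 | e1 | e1
      · exact Or.inl ⟨i, j, rfl, Or.inl e1⟩
      · exact Or.inl ⟨i, j, rfl, Or.inr e1⟩
      · exact Or.inr ⟨i, j, rfl, hne', Or.inl e1⟩
      · exact Or.inr ⟨i, j, rfl, hne', Or.inr e1⟩
    · rintro (⟨i, j, rfl, hnd⟩ | ⟨i, j, rfl, hne, hd⟩)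
      · have hne : i.val ≠ j.val := by
          intro hc
          have hij : i = j := Subtype.ext hc
          subst hij
          rcases hnd with h | h <;> exact noLoop i h
        refine ⟨i, j, rfl, (P.flat_nondashed_iff i j).mpr ⟨hne, ?_⟩⟩
        rcases hnd with h | h
        · exact Or.inl h
        · exact Or.inr (Or.inl h)
      · refine ⟨i, j, rfl, (P.flat_nondashed_iff i j).mpr
          ⟨fun hc => hne (Subtype.ext hc), ?_⟩⟩
        rcases hd with h | h
        · exact Or.inr (Or.inr (Or.inl h))
        · exact Or.inr (Or.inr (Or.inr h))
  have hD : P.flat.edgesD = ∅ := by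
    apply Finset.eq_empty_iff_forall_notMem.mpr
    intro e he
    simp only [edgesD, Finset.mem_filter, Finset.mem_univ, true_and] at he
    obtain ⟨i, j, -, -, hd⟩ := he
    exact P.flat_not_dashed i j hd
  have hdisj : Disjoint P.edgesND P.edgesD := by
    rw [Finset.disjoint_left]
    intro e he1 he2
    simp only [edgesND, edgesD, Finset.mem_filter, Finset.mem_univ, true_and] at he1 he2
    obtain ⟨i, j, rfl, hnd⟩ := he1
    obtain ⟨k, l, hkl, hne, hd⟩ := he2
    rcases Sym2.eq_iff.mp hkl with ⟨rfl, rfl⟩ | ⟨rfl, rfl⟩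
    · exact P.not_nd_and_dashed hHO i j hnd hd
    · exact P.not_nd_and_dashed hHO i j hnd (P.dashed_symm hd)
  unfold numEdges
  rw [hND, hD, Finset.card_empty, add_zero, Finset.card_union_of_disjoint hdisj]

lemma flat_cycles (htree : P.cycles = ∅) : P.flat.cycles = ∅ := by
  apply Set.eq_empty_iff_forall_notMem.mpr
  intro s hs
  simp only [cycles, Set.mem_union, Set.mem_setOf_eq] at hs
  rw [RG_flat] at hs
  rcases hs with ⟨v, hv, -⟩ | hw
  · exact P.flat_no_loop v hv
  · have hmem : s ∈ P.cycles := Or.inr hw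
    rw [htree] at hmem
    exact hmem

lemma flat_height01 (noLoop : ∀ v : Pos n, ¬ P.HasLoopAt v) (hns : ¬ P.Separable) :
    P.flat.Height01 := by
  refine ⟨?_, ?_, ?_⟩
  · intro x y z h1 h2
    rw [lt_flat_iff] at h1 h2
    obtain ⟨-, hy, -, -⟩ := h1
    obtain ⟨hy', -, -, -⟩ := h2
    omega
  · intro i j hi hj h
    rw [lt_flat_iff] at h
    obtain ⟨h1, -, -, -⟩ := h
    omega
  · have hns' : ∃ x y : ℤ, x < 0 ∧ 0 < y ∧ P.lt x y := by
      by_contra hc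
      apply hns
      intro i j hi hj hlt
      exact hc ⟨i, j, hi, hj, hlt⟩
    obtain ⟨x, y, hx, hy, hxy⟩ := hns'
    obtain ⟨-, -, -, hy2⟩ := P.supp hxy.1
    have hy3 : y ≤ (n : ℤ) := by rwa [abs_of_pos hy] at hy2
    have hyP : y ∈ Finset.Icc (1 : ℤ) (n : ℤ) := by
      simp only [Finset.mem_Icc]; omega
    have hne : x ≠ -y := by
      intro hc
      subst hc
      exact noLoop ⟨y, hyP⟩ hxy
    refine ⟨x, y, ?_⟩
    rw [lt_flat_iff]
    exact ⟨hx, hy, hne, Or.inl (by rwa [neg_neg])⟩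

end TypeCPoset


/-- **Proposition.** Let `P` be a connected, non-separable type-C poset of height `(1,1)`
such that `RG(P)` is a tree.  Then there exists a connected type-C poset `P'` of height
`(0,1)` (on the same vertex set, so `|V(P)| = |V(P')|`) such that `|E(P)| = |E(P')|`,
`RG(P')` is a tree, and `ind g_C(P) = ind g_C(P')`. -/
theorem tree_height11_reduction (n : ℕ) (P : TypeCPoset n)
    (hconn : (TypeCPoset.RG P).Connected) (hns : ¬ P.Separable)
    (h11 : P.Height11) (htree : P.cycles = ∅) :
    ∃ P' : TypeCPoset n,
      (TypeCPoset.RG P').Connected ∧ P'.Height01 ∧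
      Fintype.card (Pos n) = Fintype.card (Pos n) ∧
      P'.numEdges = P.numEdges ∧ P'.cycles = ∅ ∧
      ∀ (g g' : LieSubalgebra ℂ (Mat n)),
        g.toSubmodule = Submodule.span ℂ (TypeCPoset.gcSet P) →
        g'.toSubmodule = Submodule.span ℂ (TypeCPoset.gcSet P') →
        lieIndex ↥g = lieIndex ↥g' := by
  have hHO : P.HeightOne := h11.1
  have noLoop : ∀ v : Pos n, ¬ P.HasLoopAt v := by
    intro v hv
    have hmem : ({Sym2.mk v v} : Finset (Sym2 (Pos n))) ∈ P.cycles :=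
      Or.inl ⟨v, hv, rfl⟩
    rw [htree] at hmem
    exact hmem
  refine ⟨P.flat, ?_, P.flat_height01 noLoop hns, rfl,
    P.flat_numEdges hHO noLoop, P.flat_cycles htree, ?_⟩
  · rw [TypeCPoset.RG_flat]
    exact hconn
  · intro g g' hg hg'
    have hmap : Submodule.map
        ((cequiv P.ρP P.εP P.ρP_invol P.εP_sq : Mat n ≃ₗ[ℂ] Mat n) :
          Mat n →ₗ[ℂ] Mat n) g.toSubmodule = g'.toSubmodule := by
      rw [hg, hg', TypeCPoset.cequiv_toLinearMap]
      exact P.map_span_flat hHO noLoop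
    set V : Mat n ≃ₗ[ℂ] Mat n := cequiv P.ρP P.εP P.ρP_invol P.εP_sq with hV
    have hmem : ∀ x : Mat n, x ∈ g → V x ∈ g' := by
      intro x hx
      have h1 : V x ∈ Submodule.map (V : Mat n →ₗ[ℂ] Mat n) g.toSubmodule :=
        Submodule.mem_map_of_mem hx
      rw [hmap] at h1
      exact h1
    have hmem' : ∀ y : Mat n, y ∈ g' → V.symm y ∈ g := by
      intro y hy
      have h1 : y ∈ Submodule.map (V : Mat n →ₗ[ℂ] Mat n) g.toSubmodule := by
        rw [hmap]; exact hy
      obtain ⟨x, hx, hxy⟩ := h1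
      have hsy : V.symm y = x := by rw [← hxy]; exact V.symm_apply_apply x
      rw [hsy]; exact hx
    exact lieIndex_eq_of_equiv
      { toFun := fun x => ⟨V x.1, hmem x.1 x.2⟩
        map_add' := fun x y => Subtype.ext
          (by show V ((x : Mat n) + (y : Mat n)) = V x.1 + V y.1; exact map_add V x.1 y.1)
        map_smul' := fun c x => Subtype.ext
          (by show V (c • (x : Mat n)) = c • V x.1; exact map_smul V c x.1)
        map_lie' := fun {x y} => Subtype.ext (by
          show V ⁅(x : Mat n), (y : Mat n)⁆ = ⁅V x.1, V y.1⁆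
          exact cmap_lie P.ρP P.εP P.ρP_invol P.εP_sq x.1 y.1)
        invFun := fun y => ⟨V.symm y.1, hmem' y.1 y.2⟩
        left_inv := fun x => Subtype.ext (V.symm_apply_apply x.1)
        right_inv := fun y => Subtype.ext (V.apply_symm_apply y.1) }

end LiePoset
end

section
/- Let P be a connected type-C poset of height one. If the relation graph RG(P) contains two self-loops (at two distinct vertices), then g_C(P) is not contact. -/
open scoped DirectSum

namespace LiePoset
set_option linter.dupNamespace false
attribute [local instance 100] LieRing.ofAssociativeRing
open TypeCPoset Matrix

variable {n : ℕ}

lemma Pos.one_le (i : Pos n) : 1 ≤ i.val := (Finset.mem_Icc.mp i.property).1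

@[simp] lemma toIdx_eq_toIdx_iff {i j : Pos n} : Pos.toIdx i = Pos.toIdx j ↔ i = j := by
  constructor
  · intro h
    have : i.val = j.val := congrArg (Subtype.val : Idx n → ℤ) h
    exact Subtype.ext this
  · rintro rfl; rfl

@[simp] lemma negIdx_eq_negIdx_iff {i j : Pos n} :
    (Pos.toIdx i).neg = (Pos.toIdx j).neg ↔ i = j := by
  constructor
  · intro h
    have : -i.val = -j.val := congrArg (Subtype.val : Idx n → ℤ) h
    exact Subtype.ext (by omega)
  · rintro rfl; rfl

@[simp] lemma toIdx_ne_negIdx (i j : Pos n) : Pos.toIdx i = (Pos.toIdx j).neg ↔ False := by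
  simp only [iff_false]
  intro h
  have : i.val = -j.val := congrArg (Subtype.val : Idx n → ℤ) h
  have h1 := Pos.one_le i
  have h2 := Pos.one_le j
  omega

@[simp] lemma negIdx_ne_toIdx (i j : Pos n) : (Pos.toIdx i).neg = Pos.toIdx j ↔ False := by
  simp only [iff_false]
  intro h
  have : -i.val = j.val := congrArg (Subtype.val : Idx n → ℤ) h
  have h1 := Pos.one_le i
  have h2 := Pos.one_le j
  omega

lemma mulEE (a b c d : Idx n) :
    single a b (1:ℂ) * single c d 1 =
      if b = c then single a d 1 else 0 := by
  rcases eq_or_ne b c with h | h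
  · subst h; rw [if_pos rfl, single_mul_single_same, one_mul]
  · rw [if_neg h, single_mul_single_of_ne (h := h)]

lemma posval_ne {i j : Pos n} (h : i ≠ j) : i.val ≠ j.val := fun hv => h (Subtype.ext hv)
/-- The non-`D` part of the spanning set: matrices attached to edges of `RG(P)`. -/
def edgeSet (P : TypeCPoset n) : Set (Mat n) :=
  {M | (∃ i j : Pos n, P.lt (-j.val) (-i.val) ∧ M = TypeCPoset.Rdash i j)
      ∨ (∃ i j : Pos n, P.lt (-i.val) j.val ∧ P.lt (-j.val) i.val ∧ M = TypeCPoset.Rpm i j)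
      ∨ (∃ i : Pos n, P.lt (-i.val) i.val ∧ M = TypeCPoset.Eloop i)}

lemma edgeSet_subset_gcSet (P : TypeCPoset n) : edgeSet P ⊆ TypeCPoset.gcSet P := by
  intro M hM
  rcases hM with h | h | h
  · exact Or.inr (Or.inl h)
  · exact Or.inr (Or.inr (Or.inl h))
  · exact Or.inr (Or.inr (Or.inr h))

lemma lie_D_eloop (k q : Pos n) :
    ⁅Dmat k, Eloop q⁆ = ((if k = q then 2 else 0 : ℂ)) • Eloop q := by
  rw [Ring.lie_def]
  unfold Dmat Eloop
  simp only [sub_mul, mul_sub, mul_add, add_mul, mulEE]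
  simp only [toIdx_eq_toIdx_iff, negIdx_eq_negIdx_iff, toIdx_ne_negIdx, negIdx_ne_toIdx,
    if_false]
  rcases eq_or_ne k q with rfl | h1
  · simp only [eq_self_iff_true, if_true]; module
  · simp only [if_neg h1, if_neg (Ne.symm h1), smul_zero]; simp

lemma lie_D_rpm (k q r : Pos n) :
    ⁅Dmat k, Rpm q r⁆ =
      (((if k = q then 1 else 0) + (if k = r then 1 else 0) : ℂ)) • Rpm q r := by
  rw [Ring.lie_def]
  unfold Dmat Rpm
  simp only [sub_mul, mul_sub, mul_add, add_mul, mulEE]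
  simp only [toIdx_eq_toIdx_iff, negIdx_eq_negIdx_iff, toIdx_ne_negIdx, negIdx_ne_toIdx,
    if_false]
  rcases eq_or_ne k q with rfl | h1 <;> rcases eq_or_ne k r with rfl | h2
  · simp only [eq_self_iff_true, if_true]; module
  · simp only [eq_self_iff_true, if_true, if_neg h2, if_neg (Ne.symm h2)]; module
  · simp only [eq_self_iff_true, if_true, if_neg h1, if_neg (Ne.symm h1)]; module
  · simp only [if_neg h1, if_neg (Ne.symm h1), if_neg h2, if_neg (Ne.symm h2)]; simp

lemma lie_D_rdash (k q r : Pos n) :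
    ⁅Dmat k, Rdash q r⁆ =
      (((if k = r then 1 else 0) - (if k = q then 1 else 0) : ℂ)) • Rdash q r := by
  rw [Ring.lie_def]
  unfold Dmat Rdash
  simp only [sub_mul, mul_sub, mul_add, add_mul, mulEE]
  simp only [toIdx_eq_toIdx_iff, negIdx_eq_negIdx_iff, toIdx_ne_negIdx, negIdx_ne_toIdx,
    if_false]
  rcases eq_or_ne k q with rfl | h1 <;> rcases eq_or_ne k r with rfl | h2
  · simp only [eq_self_iff_true, if_true]; module
  · simp only [eq_self_iff_true, if_true, if_neg h2, if_neg (Ne.symm h2)]; module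
  · simp only [eq_self_iff_true, if_true, if_neg h1, if_neg (Ne.symm h1)]; module
  · simp only [if_neg h1, if_neg (Ne.symm h1), if_neg h2, if_neg (Ne.symm h2)]; simp

lemma lie_D_D (k l : Pos n) : ⁅Dmat k, Dmat l⁆ = 0 := by
  rw [Ring.lie_def]
  unfold Dmat
  simp only [sub_mul, mul_sub, mul_add, add_mul, mulEE]
  simp only [toIdx_eq_toIdx_iff, negIdx_eq_negIdx_iff, toIdx_ne_negIdx, negIdx_ne_toIdx,
    if_false]
  rcases eq_or_ne k l with rfl | h1
  · simp only [eq_self_iff_true, if_true]; module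
  · simp only [if_neg h1, if_neg (Ne.symm h1)]; simp
lemma edge_mul_zero {P : TypeCPoset n} (hP : P.HeightOne) {a b : Mat n}
    (ha : a ∈ edgeSet P) (hb : b ∈ edgeSet P) : a * b = 0 := by
  obtain ⟨i,j,hij,rfl⟩|⟨i,j,hij1,hij2,rfl⟩|⟨i,hi,rfl⟩ := ha <;>
    obtain ⟨k,l,hkl,rfl⟩|⟨k,l,hkl1,hkl2,rfl⟩|⟨k,hk,rfl⟩ := hb <;>
      simp only [TypeCPoset.Rdash, TypeCPoset.Rpm, TypeCPoset.Eloop, sub_mul, mul_sub, mul_add, add_mul, mulEE, toIdx_eq_toIdx_iff,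
        negIdx_eq_negIdx_iff, toIdx_ne_negIdx, negIdx_ne_toIdx, if_false]
  -- Rdash * Rdash
  · have h1 : ¬ (i = l) := by rintro rfl; exact hP _ _ _ hij hkl
    have h2 : ¬ (j = k) := by rintro rfl; exact hP _ _ _ hkl hij
    simp [if_neg h1, if_neg h2]
  -- Rdash * Rpm
  · have h1 : ¬ (i = k) := by rintro rfl; exact hP _ _ _ hij hkl1
    have h2 : ¬ (i = l) := by rintro rfl; exact hP _ _ _ hij hkl2
    simp [if_neg h1, if_neg h2]
  -- Rdash * Eloop
  · have h1 : ¬ (i = k) := by rintro rfl; exact hP _ _ _ hij hk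
    simp [if_neg h1]
  -- Rpm * Rdash
  · have h1 : ¬ (j = k) := by rintro rfl; exact hP _ _ _ hkl hij2
    have h2 : ¬ (i = k) := by rintro rfl; exact hP _ _ _ hkl hij1
    simp [if_neg h1, if_neg h2]
  -- Rpm * Rpm
  · simp
  -- Rpm * Eloop
  · simp
  -- Eloop * Rdash
  · have h1 : ¬ (i = k) := by rintro rfl; exact hP _ _ _ hkl hi
    simp [if_neg h1]
  -- Eloop * Rpm
  · simp
lemma EE_apply (a b c d : Idx n) (x : ℂ) :
    single a b x c d = if a = c ∧ b = d then x else 0 := by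
  rw [Matrix.single]; rfl

lemma edge_ne_zero {P : TypeCPoset n} {m : Mat n} (hm : m ∈ edgeSet P) : m ≠ 0 := by
  obtain ⟨i,j,hij,rfl⟩|⟨i,j,hij1,hij2,rfl⟩|⟨i,hi,rfl⟩ := hm <;> intro h
  · have := congrFun (congrFun h (Pos.toIdx i)) (Pos.toIdx j)
    simp [TypeCPoset.Rdash, Matrix.sub_apply, EE_apply, toIdx_eq_toIdx_iff,
      negIdx_ne_toIdx] at this
  · have := congrFun (congrFun h ((Pos.toIdx i).neg)) (Pos.toIdx j)
    rcases eq_or_ne j i with rfl | hne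
    · norm_num [TypeCPoset.Rpm, Matrix.add_apply, EE_apply] at this
    · norm_num [TypeCPoset.Rpm, Matrix.add_apply, EE_apply, negIdx_eq_negIdx_iff,
        toIdx_eq_toIdx_iff, hne, hne.symm] at this
  · have := congrFun (congrFun h ((Pos.toIdx i).neg)) (Pos.toIdx i)
    simp [TypeCPoset.Eloop, EE_apply] at this

lemma rdash_apply_vneg_v (i j v : Pos n) :
    TypeCPoset.Rdash i j ((Pos.toIdx v).neg) (Pos.toIdx v) = 0 := by
  simp [TypeCPoset.Rdash, Matrix.sub_apply, EE_apply, toIdx_ne_negIdx, negIdx_ne_toIdx,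
    toIdx_eq_toIdx_iff, negIdx_eq_negIdx_iff]

lemma rpm_apply_vneg_v {i j : Pos n} (hij : i ≠ j) (v : Pos n) :
    TypeCPoset.Rpm i j ((Pos.toIdx v).neg) (Pos.toIdx v) = 0 := by
  simp only [TypeCPoset.Rpm, Matrix.add_apply, EE_apply, negIdx_eq_negIdx_iff,
    toIdx_eq_toIdx_iff]
  rw [if_neg, if_neg, add_zero]
  · rintro ⟨rfl, rfl⟩; exact hij rfl
  · rintro ⟨rfl, rfl⟩; exact hij rfl

lemma eloop_apply_vneg_v_self (v : Pos n) :
    TypeCPoset.Eloop v ((Pos.toIdx v).neg) (Pos.toIdx v) = 1 := by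
  simp [TypeCPoset.Eloop, EE_apply]

lemma eloop_apply_vneg_v_ne {q v : Pos n} (h : q ≠ v) :
    TypeCPoset.Eloop q ((Pos.toIdx v).neg) (Pos.toIdx v) = 0 := by
  simp [TypeCPoset.Eloop, EE_apply, negIdx_eq_negIdx_iff, h]

lemma TypeCPoset.lt_nsymm_s13 (P : TypeCPoset n) {i j : ℤ} (h : i ≠ -j) :
    P.lt i j ↔ P.lt (-j) (-i) := by
  unfold TypeCPoset.lt
  rw [P.nsymm h]
  constructor <;> rintro ⟨h1, h2⟩ <;> exact ⟨h1, by omega⟩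
/-- Invariant along a walk: state at an `X`-type vertex `q`. -/
def StX (P : TypeCPoset n) (Φ : Mat n →ₗ[ℂ] ℂ) (v q : Pos n) : Prop :=
  ∃ (x : Mat n) (ε : ℂ), x ∈ Submodule.span ℂ (edgeSet P) ∧ (ε = 1 ∨ ε = -1) ∧
    Φ x = ε ∧ (∀ i : Pos n, Φ ⁅Dmat i, x⁆ = if i = q then 2 * ε else 0) ∧
    x ((Pos.toIdx v).neg) (Pos.toIdx v) = (Φ (TypeCPoset.Eloop v))⁻¹ ∧
    ∃ z : ℤ, P.lt (-q.val) z

/-- Invariant along a walk: state at a `Y`-type vertex `q`. -/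
def StY (P : TypeCPoset n) (Φ : Mat n →ₗ[ℂ] ℂ) (v q : Pos n) : Prop :=
  ∃ (x : Mat n) (ε : ℂ), x ∈ Submodule.span ℂ (edgeSet P) ∧ (ε = 1 ∨ ε = -1) ∧
    Φ x = -ε ∧ (∀ i : Pos n, Φ ⁅Dmat i, x⁆ = if i = q then 2 * ε else 0) ∧
    x ((Pos.toIdx v).neg) (Pos.toIdx v) = (Φ (TypeCPoset.Eloop v))⁻¹ ∧
    ∃ z : ℤ, P.lt z (-q.val)

lemma step {P : TypeCPoset n} (hP : P.HeightOne) (Φ : Mat n →ₗ[ℂ] ℂ)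
    (hne : ∀ m ∈ edgeSet P, Φ m ≠ 0) (v : Pos n) {q r : Pos n}
    (h : (TypeCPoset.RG P).Adj q r) :
    (StX P Φ v q ∨ StY P Φ v q) → (StX P Φ v r ∨ StY P Φ v r) := by
  intro hst
  have h' : q ≠ r ∧ (P.lt (-q.val) r.val ∨ P.lt (-r.val) q.val ∨
      P.lt (-q.val) (-r.val) ∨ P.lt (-r.val) (-q.val)) := h
  obtain ⟨hqr, hrel⟩ := h'
  have hvv : q.val ≠ r.val := posval_ne hqr
  -- unify the two non-dashed cases
  have hrel' : (P.lt (-q.val) r.val ∧ P.lt (-r.val) q.val) ∨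
      P.lt (-q.val) (-r.val) ∨ P.lt (-r.val) (-q.val) := by
    rcases hrel with h1 | h1 | h1 | h1
    · refine Or.inl ⟨h1, ?_⟩
      have := (P.lt_nsymm_s13 (show (-q.val) ≠ -r.val by omega)).mp h1
      simpa using this
    · refine Or.inl ⟨?_, h1⟩
      have := (P.lt_nsymm_s13 (show (-r.val) ≠ -q.val by omega)).mp h1
      simpa using this
    · exact Or.inr (Or.inl h1)
    · exact Or.inr (Or.inr h1)
  rcases hrel' with ⟨hnd, hnd2⟩ | hd1 | hd2
  · -- non-dashed edge: must be in state X
    rcases hst with ⟨x, ε, hxs, hεpm, hΦx, hres, hent, z, hz⟩ |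
        ⟨x, ε, hxs, hεpm, hΦx, hres, hent, z, hz⟩
    swap
    · exact absurd hnd (fun hc => hP _ _ _ hz hc)
    set M : Mat n := TypeCPoset.Rpm q r with hMdef
    have hM : M ∈ edgeSet P := Or.inr (Or.inl ⟨q, r, hnd, hnd2, rfl⟩)
    have hc : Φ M ≠ 0 := hne M hM
    refine Or.inl ⟨x - (2 * ε * (Φ M)⁻¹) • M, -ε, ?_, ?_, ?_, ?_, ?_, ⟨q.val, hnd2⟩⟩
    · exact sub_mem hxs (Submodule.smul_mem _ _ (Submodule.subset_span hM))
    · rcases hεpm with rfl | rfl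
      · exact Or.inr (by norm_num)
      · exact Or.inl (by norm_num)
    · rw [_root_.map_sub, _root_.map_smul, hΦx, smul_eq_mul]
      field_simp
      all_goals ring
    · intro i
      rw [lie_sub, lie_smul, _root_.map_sub, _root_.map_smul, hres i, smul_eq_mul, lie_D_rpm, _root_.map_smul,
        smul_eq_mul]
      rcases eq_or_ne i q with rfl | hiq
      · rw [if_pos rfl, if_pos rfl, if_neg hqr, if_neg (by rintro rfl; exact hqr rfl)]
        field_simp
        all_goals ring
      · rcases eq_or_ne i r with rfl | hir
        · rw [if_neg hiq, if_pos rfl, if_neg hiq, if_pos rfl]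
          field_simp
          all_goals ring
        · rw [if_neg hiq, if_neg hir, if_neg hiq, if_neg hir]
          ring
    · rw [Matrix.sub_apply, Matrix.smul_apply, hMdef, rpm_apply_vneg_v hqr, hent]
      simp
  · -- dashed edge  -q ≺ -r : must be in state X, move to state Y
    rcases hst with ⟨x, ε, hxs, hεpm, hΦx, hres, hent, z, hz⟩ |
        ⟨x, ε, hxs, hεpm, hΦx, hres, hent, z, hz⟩
    swap
    · exact absurd hd1 (fun hc => hP _ _ _ hz hc)
    set M : Mat n := TypeCPoset.Rdash r q with hMdef
    have hM : M ∈ edgeSet P := Or.inl ⟨r, q, hd1, rfl⟩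
    have hc : Φ M ≠ 0 := hne M hM
    refine Or.inr ⟨x - (2 * ε * (Φ M)⁻¹) • M, ε, ?_, hεpm, ?_, ?_, ?_, ⟨-q.val, hd1⟩⟩
    · exact sub_mem hxs (Submodule.smul_mem _ _ (Submodule.subset_span hM))
    · rw [_root_.map_sub, _root_.map_smul, hΦx, smul_eq_mul]
      field_simp
      all_goals ring
    · intro i
      rw [lie_sub, lie_smul, _root_.map_sub, _root_.map_smul, hres i, smul_eq_mul, lie_D_rdash, _root_.map_smul,
        smul_eq_mul]
      rcases eq_or_ne i q with rfl | hiq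
      · rw [if_pos rfl, if_neg hqr, if_pos rfl, if_neg hqr]
        field_simp
        all_goals ring
      · rcases eq_or_ne i r with rfl | hir
        · rw [if_neg hiq, if_pos rfl, if_neg hiq, if_pos rfl]
          field_simp
          all_goals ring
        · rw [if_neg hiq, if_neg hir, if_neg hir, if_neg hiq]
          ring
    · rw [Matrix.sub_apply, Matrix.smul_apply, hMdef, rdash_apply_vneg_v, hent]
      simp
  · -- dashed edge  -r ≺ -q : must be in state Y, move to state X
    rcases hst with ⟨x, ε, hxs, hεpm, hΦx, hres, hent, z, hz⟩ |
        ⟨x, ε, hxs, hεpm, hΦx, hres, hent, z, hz⟩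
    · exact absurd hz (fun hc => hP _ _ _ hd2 hc)
    set M : Mat n := TypeCPoset.Rdash q r with hMdef
    have hM : M ∈ edgeSet P := Or.inl ⟨q, r, hd2, rfl⟩
    have hc : Φ M ≠ 0 := hne M hM
    refine Or.inl ⟨x + (2 * ε * (Φ M)⁻¹) • M, ε, ?_, hεpm, ?_, ?_, ?_, ⟨-q.val, hd2⟩⟩
    · exact add_mem hxs (Submodule.smul_mem _ _ (Submodule.subset_span hM))
    · rw [_root_.map_add, _root_.map_smul, hΦx, smul_eq_mul]
      field_simp
      all_goals ring
    · intro i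
      rw [lie_add, lie_smul, _root_.map_add, _root_.map_smul, hres i, smul_eq_mul, lie_D_rdash, _root_.map_smul,
        smul_eq_mul]
      rcases eq_or_ne i q with rfl | hiq
      · rw [if_pos rfl, if_neg hqr, if_pos rfl, if_neg hqr]
        field_simp
        all_goals ring
      · rcases eq_or_ne i r with rfl | hir
        · rw [if_neg hiq, if_pos rfl, if_pos rfl, if_neg hiq]
          field_simp
          all_goals ring
        · rw [if_neg hiq, if_neg hir, if_neg hir, if_neg hiq]
          ring
    · rw [Matrix.add_apply, Matrix.smul_apply, hMdef, rdash_apply_vneg_v, hent]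
      simp
lemma walk_invariant {P : TypeCPoset n} (hP : P.HeightOne) (Φ : Mat n →ₗ[ℂ] ℂ)
    (hne : ∀ m ∈ edgeSet P, Φ m ≠ 0) (v : Pos n) :
    ∀ {q w : Pos n} (p : (TypeCPoset.RG P).Walk q w),
      (StX P Φ v q ∨ StY P Φ v q) → (StX P Φ v w ∨ StY P Φ v w) := by
  intro q w p
  induction p with
  | nil => exact id
  | cons h p ih => exact fun hq => ih (step hP Φ hne v h hq)

lemma span_lie_edge_zero {P : TypeCPoset n} (hP : P.HeightOne) {m : Mat n}
    (hm : m ∈ edgeSet P) :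
    ∀ x ∈ Submodule.span ℂ (edgeSet P), ⁅x, m⁆ = 0 := by
  intro x hx
  induction hx using Submodule.span_induction with
  | mem a ha => rw [Ring.lie_def, edge_mul_zero hP ha hm, edge_mul_zero hP hm ha, sub_zero]
  | zero => simp
  | add a b _ _ ha hb => rw [add_lie, ha, hb, add_zero]
  | smul c a _ ha => rw [smul_lie, ha, smul_zero]

lemma exists_degenerate {P : TypeCPoset n} (hP : P.HeightOne)
    (hconn : (TypeCPoset.RG P).Connected)
    {v w : Pos n} (hvw : v ≠ w) (hlv : P.HasLoopAt v) (hlw : P.HasLoopAt w)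
    (Φ : Mat n →ₗ[ℂ] ℂ) :
    ∃ x ∈ Submodule.span ℂ (edgeSet P), x ≠ 0 ∧ Φ x = 0 ∧
      ∀ i : Pos n, Φ ⁅Dmat i, x⁆ = 0 := by
  by_cases hzero : ∃ m ∈ edgeSet P, Φ m = 0
  · obtain ⟨m, hm, hΦm⟩ := hzero
    refine ⟨m, Submodule.subset_span hm, edge_ne_zero hm, hΦm, ?_⟩
    intro i
    obtain ⟨c, hc⟩ : ∃ c : ℂ, ⁅Dmat i, m⁆ = c • m := by
      obtain ⟨a,b,hab,rfl⟩|⟨a,b,h1,h2,rfl⟩|⟨a,ha,rfl⟩ := hm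
      · exact ⟨_, lie_D_rdash i a b⟩
      · exact ⟨_, lie_D_rpm i a b⟩
      · exact ⟨_, lie_D_eloop i a⟩
    rw [hc, _root_.map_smul, smul_eq_mul, hΦm, mul_zero]
  · push_neg at hzero
    have hMv : TypeCPoset.Eloop v ∈ edgeSet P := Or.inr (Or.inr ⟨v, hlv, rfl⟩)
    have hcv := hzero _ hMv
    have hstart : StX P Φ v v := by
      refine ⟨(Φ (TypeCPoset.Eloop v))⁻¹ • TypeCPoset.Eloop v, 1,
        Submodule.smul_mem _ _ (Submodule.subset_span hMv), Or.inl rfl, ?_, ?_, ?_,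
        ⟨v.val, hlv⟩⟩
      · rw [_root_.map_smul, smul_eq_mul]
        field_simp
      · intro i
        rw [lie_smul, _root_.map_smul, lie_D_eloop, _root_.map_smul, smul_eq_mul,
          smul_eq_mul]
        rcases eq_or_ne i v with rfl | hiv
        · rw [if_pos rfl, if_pos rfl]
          field_simp
          all_goals ring
        · rw [if_neg hiv, if_neg hiv]
          ring
      · rw [Matrix.smul_apply, eloop_apply_vneg_v_self, smul_eq_mul, mul_one]
    obtain ⟨p⟩ := hconn.preconnected v w
    have hw := walk_invariant hP Φ hzero v p (Or.inl hstart)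
    rcases hw with ⟨x, ε, hxs, hεpm, hΦx, hres, hent, z, hz⟩ |
        ⟨x, ε, hxs, hεpm, hΦx, hres, hent, z, hz⟩
    swap
    · exact absurd hlw (fun hc => hP _ _ _ hz hc)
    have hMw : TypeCPoset.Eloop w ∈ edgeSet P := Or.inr (Or.inr ⟨w, hlw, rfl⟩)
    have hcw := hzero _ hMw
    refine ⟨x - (ε * (Φ (TypeCPoset.Eloop w))⁻¹) • TypeCPoset.Eloop w,
      sub_mem hxs (Submodule.smul_mem _ _ (Submodule.subset_span hMw)), ?_, ?_, ?_⟩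
    · intro h0
      have h1 := congrFun (congrFun h0 ((Pos.toIdx v).neg)) (Pos.toIdx v)
      rw [Matrix.sub_apply, Matrix.smul_apply, eloop_apply_vneg_v_ne (Ne.symm hvw),
        smul_zero, sub_zero, hent, Matrix.zero_apply] at h1
      exact (inv_ne_zero hcv) h1
    · rw [_root_.map_sub, _root_.map_smul, hΦx, smul_eq_mul]
      field_simp
      ring
    · intro i
      rw [lie_sub, lie_smul, _root_.map_sub, _root_.map_smul, hres i, lie_D_eloop,
        _root_.map_smul, smul_eq_mul, smul_eq_mul]
      rcases eq_or_ne i w with rfl | hiw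
      · rw [if_pos rfl, if_pos rfl]
        field_simp
        all_goals ring
      · rw [if_neg hiw, if_neg hiw]
        ring
/-- **Proposition.** Let `P` be a connected type-C poset of height one.  If `RG(P)`
contains two self-loops (at two distinct vertices), then `g_C(P)` is not contact. -/
theorem not_contact_of_two_selfLoops (n : ℕ) (P : TypeCPoset n)
    (hP : P.HeightOne) (hconn : (TypeCPoset.RG P).Connected)
    (hloops : ∃ v w : Pos n, v ≠ w ∧ P.HasLoopAt v ∧ P.HasLoopAt w)
    (g : LieSubalgebra ℂ (Mat n))
    (hg : g.toSubmodule = Submodule.span ℂ (TypeCPoset.gcSet P)) :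
    ¬ IsContact ↥g := by
  rintro ⟨φ, -, hnd⟩
  obtain ⟨v, w, hvw, hlv, hlw⟩ := hloops
  obtain ⟨Q, hQ⟩ := Submodule.exists_isCompl (g.toSubmodule)
  set Φ : Mat n →ₗ[ℂ] ℂ := φ ∘ₗ ((g.toSubmodule).linearProjOfIsCompl Q hQ) with hΦdef
  have hΦ : ∀ (m : Mat n) (hm : m ∈ g), Φ m = φ ⟨m, hm⟩ := by
    intro m hm
    have h1 : ((g.toSubmodule).linearProjOfIsCompl Q hQ) m = ⟨m, hm⟩ :=
      Submodule.linearProjOfIsCompl_apply_left hQ ⟨m, hm⟩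
    simp only [hΦdef, LinearMap.coe_comp, Function.comp_apply]
    exact congrArg φ h1
  obtain ⟨x, hxs, hx0, hΦx, hres⟩ := exists_degenerate hP hconn hvw hlv hlw Φ
  have hxg : x ∈ g := by
    rw [← LieSubalgebra.mem_toSubmodule, hg]
    exact Submodule.span_mono (edgeSet_subset_gcSet P) hxs
  have hbr : ∀ y ∈ Submodule.span ℂ (TypeCPoset.gcSet P), Φ ⁅x, y⁆ = 0 := by
    intro y hy
    induction hy using Submodule.span_induction with
    | mem a ha =>
        rcases ha with ⟨i, rfl⟩ | ha
        · have h1 : ⁅x, Dmat i⁆ = -⁅Dmat i, x⁆ := by rw [← lie_skew]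
          rw [h1, _root_.map_neg, hres i, neg_zero]
        · rw [span_lie_edge_zero hP ha x hxs, _root_.map_zero]
    | zero => rw [lie_zero, _root_.map_zero]
    | add a b _ _ ha hb => rw [lie_add, _root_.map_add, ha, hb, add_zero]
    | smul c a _ ha => rw [lie_smul, _root_.map_smul, ha, smul_zero]
  set X : ↥g := ⟨x, hxg⟩ with hXdef
  have hX0 : φ X = 0 := by rw [← hΦ x hxg, hΦx]
  have hker : ∀ y : ↥g, φ y = 0 → φ ⁅X, y⁆ = 0 := by
    intro y _
    have hmem : ((⁅X, y⁆ : ↥g) : Mat n) ∈ g := (⁅X, y⁆ : ↥g).2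
    have h2 := hΦ _ hmem
    simp only [Subtype.coe_eta] at h2
    rw [← h2, LieSubalgebra.coe_bracket]
    have hy : (y : Mat n) ∈ Submodule.span ℂ (TypeCPoset.gcSet P) := by
      rw [← hg]
      exact y.2
    exact hbr _ hy
  have := hnd X hX0 hker
  apply hx0
  have h3 := congrArg (Subtype.val : ↥g → Mat n) this
  exact h3

end LiePoset
end

section
/- Let P be a type-C poset of height one. Then the relation graph RG(P) contains none of the following configurations: (a) vertices i > j with a dashed edge {i,j} and a non-dashed self-loop at j; (b) two distinct vertices i, j joined by both a dashed edge and a non-dashed edge; (c) vertices i > j and k with a dashed edge {i,j} and a non-dashed edge {j,k}; (d) vertices i, j, k with dashed edges {i,j} and {j,k} where either i > j > k or i < j < k. -/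
open scoped DirectSum

namespace LiePoset

theorem aux_flip {n : ℕ} (P : TypeCPoset n) (a b : ℤ) (h : a ≠ b)
    (hl : P.lt (-a) b) : P.lt (-b) a := by
  obtain ⟨hle, hne⟩ := hl
  refine ⟨?_, by omega⟩
  have := (P.nsymm (i := -a) (j := b) (by omega)).mp hle
  simpa using this

/-- **Lemma (forbidden configurations).** If `P` is a type-C poset of height one, then
`RG(P)` contains none of the following configurations:
(a) vertices `i > j` with a dashed edge `{i,j}` and a non-dashed self-loop at `j`;
(b) two distinct vertices `i, j` joined by both a dashed and a non-dashed edge;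
(c) vertices `i > j` and `k` with a dashed edge `{i,j}` and a non-dashed edge `{j,k}`;
(d) vertices `i, j, k` with dashed edges `{i,j}` and `{j,k}`, where `i > j > k` or
`i < j < k`. -/
theorem forbidden_configurations_of_heightOne (n : ℕ) (P : TypeCPoset n)
    (hP : P.HeightOne) :
    (∀ i j : Pos n, j.val < i.val →
        ¬ (P.DashedEdge i j ∧ P.HasLoopAt j)) ∧
    (∀ i j : Pos n, i ≠ j →
        ¬ (P.DashedEdge i j ∧ P.NonDashedEdge i j)) ∧
    (∀ i j k : Pos n, j.val < i.val →
        ¬ (P.DashedEdge i j ∧ P.NonDashedEdge j k)) ∧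
    (∀ i j k : Pos n, (k.val < j.val ∧ j.val < i.val) ∨ (i.val < j.val ∧ j.val < k.val) →
        ¬ (P.DashedEdge i j ∧ P.DashedEdge j k)) := by
  have pos : ∀ i : Pos n, 1 ≤ i.val := by
    intro i
    have := i.property
    simp only [Finset.mem_Icc] at this
    omega
  refine ⟨?_, ?_, ?_, ?_⟩
  · -- (a)
    rintro i j hij ⟨hd, hl⟩
    rcases hd with h | h
    · exact hP _ _ _ h hl
    · have := P.compat h.1; omega
  · -- (b)
    rintro i j hij ⟨hd, hnd⟩
    have hv : i.val ≠ j.val := fun h => hij (Subtype.ext h)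
    have hi := pos i; have hj := pos j
    have h1 : P.lt (-i.val) j.val := by
      rcases hnd with h | h
      · exact h
      · exact aux_flip P j.val i.val (by omega) h
    have h2 : P.lt (-j.val) i.val := by
      rcases hnd with h | h
      · exact aux_flip P i.val j.val (by omega) h
      · exact h
    rcases hd with h | h
    · exact hP _ _ _ h h2
    · exact hP _ _ _ h h1
  · -- (c)
    rintro i j k hij ⟨hd, hnd⟩
    have hi := pos i; have hj := pos j; have hk := pos k
    have hd1 : P.lt (-i.val) (-j.val) := by
      rcases hd with h | h
      · exact h
      · have := P.compat h.1; omega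
    have h2 : P.lt (-j.val) k.val := by
      rcases hnd with h | h
      · exact h
      · rcases eq_or_ne k.val j.val with he | he
        · rw [he] at h; simpa [he] using h
        · exact aux_flip P k.val j.val he h
    exact hP _ _ _ hd1 h2
  · -- (d)
    rintro i j k hord ⟨hd1, hd2⟩
    rcases hord with ⟨hkj, hji⟩ | ⟨hij, hjk⟩
    · have h1 : P.lt (-i.val) (-j.val) := by
        rcases hd1 with h | h
        · exact h
        · have := P.compat h.1; omega
      have h2 : P.lt (-j.val) (-k.val) := by
        rcases hd2 with h | h
        · exact h
        · have := P.compat h.1; omega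
      exact hP _ _ _ h1 h2
    · have h1 : P.lt (-j.val) (-i.val) := by
        rcases hd1 with h | h
        · have := P.compat h.1; omega
        · exact h
      have h2 : P.lt (-k.val) (-j.val) := by
        rcases hd2 with h | h
        · have := P.compat h.1; omega
        · exact h
      exact hP _ _ _ h2 h1

end LiePoset
end
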